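/- Let r, w, x, y, z be non-negative integers with r ≥ 2, x + y = w + z, x ≥ w, x ≥ z, and x ≥ r. Then C(x,r) + C(y,r) ≥ C(w,r) + C(z,r). Moreover, the inequality is strict if x > w and x > z. -/
import Mathlib

lemma choose_lt_choose_of_lt (k b c : ℕ) (hk1 : 1 ≤ k) (hbc : b < c) (hkc : k ≤ c) :
    b.choose k < c.choose k := by
  rcases lt_or_ge b k with h | h
  · have h0 : b.choose k = 0 := Nat.choose_eq_zero_of_lt h
    have h1 : 0 < c.choose k := Nat.choose_pos hkc
    omega
  · have h1 : b.choose k < (b+1).choose k := by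
      rcases k with _ | t
      · omega
      · rw [Nat.choose_succ_succ]
        have : 0 < b.choose t := Nat.choose_pos (by omega)
        simp only [Nat.succ_eq_add_one] at *
        omega
    have h2 : (b+1).choose k ≤ c.choose k := Nat.choose_le_choose k hbc
    omega

lemma step_le (r b c : ℕ) (hr : 1 ≤ r) (hbc : b ≤ c) :
    c.choose r + (b+1).choose r ≤ (c+1).choose r + b.choose r := by
  obtain ⟨t, rfl⟩ : ∃ t, r = t + 1 := ⟨r - 1, by omega⟩
  rw [Nat.choose_succ_succ c, Nat.choose_succ_succ b]
  have := Nat.choose_le_choose t hbc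
  simp only [Nat.succ_eq_add_one] at *
  omega

lemma step_lt (r b c : ℕ) (hr : 2 ≤ r) (hbc : b < c) (hrc : r ≤ c + 1) :
    c.choose r + (b+1).choose r < (c+1).choose r + b.choose r := by
  obtain ⟨t, rfl⟩ : ∃ t, r = t + 1 := ⟨r - 1, by omega⟩
  rw [Nat.choose_succ_succ c, Nat.choose_succ_succ b]
  have := choose_lt_choose_of_lt t b c (by omega) hbc (by omega)
  simp only [Nat.succ_eq_add_one] at *
  omega

lemma main_lemma (r : ℕ) (hr : 2 ≤ r) :
    ∀ d m k x y, k ≤ m → x = m + d → m + k = x + y →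
      m.choose r + k.choose r ≤ x.choose r + y.choose r ∧
      (0 < d → r ≤ x → m.choose r + k.choose r < x.choose r + y.choose r) := by
  intro d
  induction d with
  | zero =>
    intro m k x y hkm hx hsum
    have : x = m := by omega
    have : y = k := by omega
    subst_vars
    exact ⟨le_refl _, by omega⟩
  | succ d ih =>
    intro m k x y hkm hx hsum
    have hk : k = y + d + 1 := by omega
    obtain ⟨h1, _⟩ := ih m k (m + d) (y + 1) hkm rfl (by omega)
    have hle : (m+d).choose r + (y+1).choose r ≤ (m+d+1).choose r + y.choose r :=
      step_le r y (m+d) (by omega) (by omega)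
    have he : x = m + d + 1 := by omega
    rw [he]
    constructor
    · omega
    · intro _ hrx
      have hlt : (m+d).choose r + (y+1).choose r < (m+d+1).choose r + y.choose r :=
        step_lt r y (m+d) hr (by omega) (by omega)
      omega

theorem chakraborti_chen (r w x y z : ℕ) (hr : 2 ≤ r) (hsum : x + y = w + z)
    (hw : w ≤ x) (hz : z ≤ x) (hxr : r ≤ x) :
    (w.choose r + z.choose r ≤ x.choose r + y.choose r) ∧
      (w < x → z < x → w.choose r + z.choose r < x.choose r + y.choose r) := by
  set m := max w z with hm
  set k := min w z with hk
  have hswap : w.choose r + z.choose r = m.choose r + k.choose r := by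
    rcases le_total w z with h | h
    · simp [hm, hk, max_eq_right h, min_eq_left h]; omega
    · simp [hm, hk, max_eq_left h, min_eq_right h]
  obtain ⟨h1, h2⟩ := main_lemma r hr (x - m) m k x y (min_le_max)
    (by omega) (by omega)
  refine ⟨by omega, fun hwx hzx => ?_⟩
  have := h2 (by omega) hxr
  omega
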